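/- Let G and H be connected graphs, with |V(G)|≥2. Then F(G+_T H) = 8|V(H)|F(G) + |V(G)|F(H) + 24|E(H)|M₁(G) + 12|E(G)|M₁(H) + |V(H)|ξ₄(G) + 3|V(H)|ReZG(G), where G+_T H is the T-sum. -/

import Mathlib

open SimpleGraph Finset
open scoped Classical

noncomputable section

/-- The generalized hierarchical product `G(U)ΠH`. -/
def hierProd {α β : Type*} (G : SimpleGraph α) (H : SimpleGraph β) (U : Set α) :
    SimpleGraph (α × β) where
  Adj p q := (p.1 = q.1 ∧ p.1 ∈ U ∧ H.Adj p.2 q.2) ∨ (p.2 = q.2 ∧ G.Adj p.1 q.1)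
  symm := by
    constructor
    rintro p q (⟨h1, h2, h3⟩ | ⟨h1, h2⟩)
    · exact Or.inl ⟨h1.symm, h1 ▸ h2, h3.symm⟩
    · exact Or.inr ⟨h1.symm, h2.symm⟩
  loopless := by
    constructor
    rintro p (⟨_, _, h⟩ | ⟨_, h⟩)
    · exact H.loopless.irrefl _ h
    · exact G.loopless.irrefl _ h

/-- The F-index (forgotten topological index): sum of cubes of degrees. -/
def Findex {α : Type*} [Fintype α] (G : SimpleGraph α) : ℕ :=
  ∑ v, G.degree v ^ 3

/-- The first Zagreb index: sum of squares of degrees. -/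
def M1 {α : Type*} [Fintype α] (G : SimpleGraph α) : ℕ :=
  ∑ v, G.degree v ^ 2

/-- The general first Zagreb index with exponent `n`. -/
def xiIndex {α : Type*} [Fintype α] (G : SimpleGraph α) (n : ℕ) : ℕ :=
  ∑ v, G.degree v ^ n

/-- The redefined Zagreb index `ReZG(G) = Σ_{uv∈E} d(u)d(v)(d(u)+d(v))`. -/
def ReZG {α : Type*} [Fintype α] (G : SimpleGraph α) : ℕ :=
  ∑ e ∈ G.edgeFinset,
    Sym2.lift ⟨fun u v => G.degree u * G.degree v * (G.degree u + G.degree v),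
      fun u v => by ring⟩ e

/-- The subdivision graph `S(G)`: each edge replaced by a path of length two. -/
def Sgraph {α : Type*} (G : SimpleGraph α) : SimpleGraph (α ⊕ ↥G.edgeSet) where
  Adj x y :=
    match x, y with
    | Sum.inl u, Sum.inr e => u ∈ (e : Sym2 α)
    | Sum.inr e, Sum.inl u => u ∈ (e : Sym2 α)
    | _, _ => False
  symm := by constructor; rintro (u | e) (v | f) h <;> simp_all
  loopless := by constructor; rintro (u | e) h <;> simp_all

/-- The graph on `V(G) ⊕ E(G)` whose only edges are the original edges of `G`. -/
def Ograph {α : Type*} (G : SimpleGraph α) : SimpleGraph (α ⊕ ↥G.edgeSet) where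
  Adj x y :=
    match x, y with
    | Sum.inl u, Sum.inl v => G.Adj u v
    | _, _ => False
  symm := by constructor; rintro (u | e) (v | f) h <;> simp_all <;> exact h.symm
  loopless := by constructor; rintro (u | e) h <;> simp_all

/-- The graph on `V(G) ⊕ E(G)` whose edges join pairs of adjacent edges of `G`
(line-graph adjacency). -/
def Lgraph {α : Type*} (G : SimpleGraph α) : SimpleGraph (α ⊕ ↥G.edgeSet) where
  Adj x y :=
    match x, y with
    | Sum.inr e, Sum.inr f => e ≠ f ∧ ∃ u, u ∈ (e : Sym2 α) ∧ u ∈ (f : Sym2 α)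
    | _, _ => False
  symm := by
    constructor
    rintro (u | e) (v | f) h <;> simp_all
    exact ⟨Ne.symm h.1, h.2.imp fun u hu => hu.symm⟩
  loopless := by constructor; rintro (u | e) h <;> simp_all

/-- The triangle parallel graph `R(G)`. -/
def Rgraph {α : Type*} (G : SimpleGraph α) : SimpleGraph (α ⊕ ↥G.edgeSet) :=
  Sgraph G ⊔ Ograph G

/-- The line superposition graph `Q(G)`. -/
def Qgraph {α : Type*} (G : SimpleGraph α) : SimpleGraph (α ⊕ ↥G.edgeSet) :=
  Sgraph G ⊔ Lgraph G

/-- The total graph `T(G)`. -/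
def Tgraph {α : Type*} (G : SimpleGraph α) : SimpleGraph (α ⊕ ↥G.edgeSet) :=
  Sgraph G ⊔ Ograph G ⊔ Lgraph G

/-- The F-sum `G +_F H`, where `K` is one of `S(G), R(G), Q(G), T(G)`:
the generalized hierarchical product `K(V(G))ΠH`. -/
def FSum {α β : Type*} {G : SimpleGraph α} (K : SimpleGraph (α ⊕ ↥G.edgeSet))
    (H : SimpleGraph β) : SimpleGraph ((α ⊕ ↥G.edgeSet) × β) :=
  hierProd K H (Set.range Sum.inl)

end

section Aux

open SimpleGraph Finset
open scoped Classical

private lemma deg_sum' {γ : Type*} [Fintype γ] (G : SimpleGraph γ) (v : γ) :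
    G.degree v = ∑ w, if G.Adj v w then 1 else 0 := by
  classical
  rw [degree, neighborFinset_eq_filter, card_filter]

private lemma sum_dart_fst' {γ : Type*} [Fintype γ] (G : SimpleGraph γ) (f : γ → ℕ) :
    ∑ d : G.Dart, f d.fst = ∑ v, G.degree v * f v := by
  classical
  rw [← Finset.sum_fiberwise_of_maps_to (g := fun d : G.Dart => d.fst) (t := (univ : Finset γ))
    (fun d _ => mem_univ _) (fun d : G.Dart => f d.fst)]
  refine Finset.sum_congr rfl fun v _ => ?_
  have h1 : ∀ d ∈ (univ.filter fun d : G.Dart => d.fst = v), f d.fst = f v := by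
    intro d hd
    rw [(Finset.mem_filter.mp hd).2]
  rw [Finset.sum_congr rfl h1, Finset.sum_const, smul_eq_mul]
  congr 1
  exact G.dart_fst_fiber_card_eq_degree v

private lemma edge_sum_add' {γ : Type*} [Fintype γ] (G : SimpleGraph γ) (g : γ → ℕ) :
    ∑ e ∈ G.edgeFinset, Sym2.lift ⟨fun a b => g a + g b, fun a b => by ring⟩ e
      = ∑ v, G.degree v * g v := by
  classical
  rw [← sum_dart_fst' G g]
  rw [← Finset.sum_fiberwise_of_maps_to (g := fun d : G.Dart => d.edge) (t := G.edgeFinset)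
    (fun d _ => by rw [mem_edgeFinset]; exact d.edge_mem) (fun d : G.Dart => g d.fst)]
  refine (Finset.sum_congr rfl fun e he => ?_).symm
  rw [mem_edgeFinset] at he
  induction e using Sym2.ind with
  | _ u v =>
    rw [mem_edgeSet] at he
    let d : G.Dart := ⟨(u, v), he⟩
    have hfib : ({d' : G.Dart | d'.edge = d.edge} : Finset _) = {d, d.symm} := d.edge_fiber
    have h2 : (univ.filter fun d' : G.Dart => d'.edge = s(u, v)) = {d, d.symm} := by
      convert hfib using 2
      rfl
    rw [h2, Finset.sum_pair d.symm_ne.symm, Sym2.lift_mk]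
    rfl

private lemma hierProd_degree {α β : Type*} [Fintype α] [Fintype β] (K : SimpleGraph α)
    (H : SimpleGraph β) (U : Set α) (x : α) (w : β) :
    (hierProd K H U).degree (x, w) = K.degree x + if x ∈ U then H.degree w else 0 := by
  rw [deg_sum', Fintype.sum_prod_type]
  have key : ∀ y z, (if (hierProd K H U).Adj (x, w) (y, z) then (1:ℕ) else 0)
      = (if w = z ∧ K.Adj x y then 1 else 0)
        + (if x = y ∧ x ∈ U ∧ H.Adj w z then 1 else 0) := by
    intro y z
    have hiff : (hierProd K H U).Adj (x, w) (y, z)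
        ↔ ((x = y ∧ x ∈ U ∧ H.Adj w z) ∨ (w = z ∧ K.Adj x y)) := Iff.rfl
    rw [if_congr hiff rfl rfl]
    by_cases hxy : x = y
    · subst hxy
      simp [K.irrefl]
    · simp [hxy]
  simp_rw [key, Finset.sum_add_distrib]
  congr 1
  · simp_rw [ite_and, Finset.sum_ite_eq]
    simp only [mem_univ, if_true]
    rw [← card_filter, ← neighborFinset_eq_filter, ← degree]
  · rw [Finset.sum_eq_single x (fun b _ hb => by simp [Ne.symm hb]) (by simp)]
    by_cases hU : x ∈ U
    · simp only [hU, true_and, if_true, eq_self_iff_true]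
      rw [← card_filter, ← neighborFinset_eq_filter, ← degree]
    · simp [hU]

private lemma sum_subtype_edge {γ : Type*} [Fintype γ] (G : SimpleGraph γ) (f : Sym2 γ → ℕ) :
    ∑ e : ↥G.edgeSet, f (e : Sym2 γ) = ∑ e ∈ G.edgeFinset, f e :=
  (Finset.sum_subtype G.edgeFinset (fun e => mem_edgeFinset) f).symm

private lemma sum_mem_edge {γ : Type*} [Fintype γ] (G : SimpleGraph γ) (u : γ) :
    ∑ e : ↥G.edgeSet, (if u ∈ (e : Sym2 γ) then (1:ℕ) else 0) = G.degree u := by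
  classical
  rw [sum_subtype_edge G (fun e => if u ∈ e then (1:ℕ) else 0), ← card_filter,
    ← G.card_incidenceFinset_eq_degree]
  congr 1
  rw [incidenceFinset_eq_filter]

private lemma T_adj_inl_inl {γ : Type*} (G : SimpleGraph γ) (u v : γ) :
    (Tgraph G).Adj (Sum.inl u) (Sum.inl v) ↔ G.Adj u v := by
  simp [Tgraph, Sgraph, Ograph, Lgraph, sup_adj]

private lemma T_adj_inl_inr {γ : Type*} (G : SimpleGraph γ) (u : γ) (e : ↥G.edgeSet) :
    (Tgraph G).Adj (Sum.inl u) (Sum.inr e) ↔ u ∈ (e : Sym2 γ) := by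
  simp [Tgraph, Sgraph, Ograph, Lgraph, sup_adj]

private lemma T_adj_inr_inr {γ : Type*} (G : SimpleGraph γ) (e f : ↥G.edgeSet) :
    (Tgraph G).Adj (Sum.inr e) (Sum.inr f)
      ↔ e ≠ f ∧ ∃ w, w ∈ (e : Sym2 γ) ∧ w ∈ (f : Sym2 γ) := by
  simp [Tgraph, Sgraph, Ograph, Lgraph, sup_adj]

private lemma T_deg_inl {γ : Type*} [Fintype γ] (G : SimpleGraph γ) (u : γ) :
    (Tgraph G).degree (Sum.inl u) = 2 * G.degree u := by
  rw [deg_sum', Fintype.sum_sum_type]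
  have h1 : ∑ v : γ, (if (Tgraph G).Adj (Sum.inl u) (Sum.inl v) then (1:ℕ) else 0)
      = G.degree u := by
    simp_rw [T_adj_inl_inl]
    exact (deg_sum' G u).symm
  have h2 : ∑ e : ↥G.edgeSet, (if (Tgraph G).Adj (Sum.inl u) (Sum.inr e) then (1:ℕ) else 0)
      = G.degree u := by
    simp_rw [T_adj_inl_inr]
    exact sum_mem_edge G u
  rw [h1, h2, two_mul]

private lemma T_deg_inr {γ : Type*} [Fintype γ] (G : SimpleGraph γ) (e : ↥G.edgeSet) :
    (Tgraph G).degree (Sum.inr e)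
      = Sym2.lift ⟨fun a b => G.degree a + G.degree b, fun a b => by ring⟩ (e : Sym2 γ) := by
  classical
  obtain ⟨e, he⟩ := e
  induction e using Sym2.ind with
  | _ u v =>
    have hadj : G.Adj u v := (mem_edgeSet G).mp he
    have huv : u ≠ v := hadj.ne
    rw [deg_sum', Fintype.sum_sum_type, Sym2.lift_mk]
    have h1 : ∑ a : γ,
        (if (Tgraph G).Adj (Sum.inr ⟨s(u, v), he⟩) (Sum.inl a) then (1:ℕ) else 0) = 2 := by
      have : ∀ a : γ, (Tgraph G).Adj (Sum.inr ⟨s(u, v), he⟩) (Sum.inl a) ↔ a = u ∨ a = v := by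
        intro a
        rw [(Tgraph G).adj_comm, T_adj_inl_inr]
        exact Sym2.mem_iff
      simp_rw [this]
      rw [← card_filter]
      have : (univ.filter fun a : γ => a = u ∨ a = v) = {u, v} := by
        ext a; simp
      rw [this, card_insert_of_notMem (by simp [huv]), card_singleton]
    have h2 : (∑ f : ↥G.edgeSet,
        (if (Tgraph G).Adj (Sum.inr ⟨s(u, v), he⟩) (Sum.inr f) then (1:ℕ) else 0)) + 2
        = G.degree u + G.degree v := by
      have key : ∀ f : ↥G.edgeSet,
          (if u ∈ (f : Sym2 γ) then (1:ℕ) else 0) + (if v ∈ (f : Sym2 γ) then (1:ℕ) else 0)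
          = (if (Tgraph G).Adj (Sum.inr ⟨s(u, v), he⟩) (Sum.inr f) then (1:ℕ) else 0)
            + (if f = ⟨s(u, v), he⟩ then 2 else 0) := by
        intro f
        rw [T_adj_inr_inr]
        by_cases hfe : f = (⟨s(u, v), he⟩ : ↥G.edgeSet)
        · subst hfe
          simp [huv]
        · have hne : ¬ (u ∈ (f : Sym2 γ) ∧ v ∈ (f : Sym2 γ)) := by
            intro hc
            exact hfe (Subtype.ext ((Sym2.mem_and_mem_iff huv).mp hc))
          have hmem : (∃ w, w ∈ (s(u, v) : Sym2 γ) ∧ w ∈ (f : Sym2 γ))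
              ↔ (u ∈ (f : Sym2 γ) ∨ v ∈ (f : Sym2 γ)) := by
            constructor
            · rintro ⟨w, hw1, hw2⟩
              rcases Sym2.mem_iff.mp hw1 with rfl | rfl
              · exact Or.inl hw2
              · exact Or.inr hw2
            · rintro (h | h)
              · exact ⟨u, by simp, h⟩
              · exact ⟨v, by simp, h⟩
          have hne2 : (⟨s(u, v), he⟩ : ↥G.edgeSet) ≠ f := fun h => hfe h.symm
          simp only [hne2, true_and, hmem, hfe, if_false, add_zero, ne_eq,
            not_false_eq_true]
          by_cases h1 : u ∈ (f : Sym2 γ) <;> by_cases h2 : v ∈ (f : Sym2 γ) <;>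
            simp_all
      calc (∑ f : ↥G.edgeSet,
          (if (Tgraph G).Adj (Sum.inr ⟨s(u, v), he⟩) (Sum.inr f) then (1:ℕ) else 0)) + 2
          = ∑ f : ↥G.edgeSet,
            ((if (Tgraph G).Adj (Sum.inr ⟨s(u, v), he⟩) (Sum.inr f) then (1:ℕ) else 0)
              + (if f = ⟨s(u, v), he⟩ then 2 else 0)) := by
            rw [Finset.sum_add_distrib, Finset.sum_ite_eq' univ (⟨s(u, v), he⟩ : ↥G.edgeSet)]
            simp
        _ = ∑ f : ↥G.edgeSet,
            ((if u ∈ (f : Sym2 γ) then (1:ℕ) else 0) + (if v ∈ (f : Sym2 γ) then (1:ℕ) else 0)) := by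
            refine Finset.sum_congr rfl fun f _ => (key f).symm
        _ = G.degree u + G.degree v := by
            rw [Finset.sum_add_distrib, sum_mem_edge, sum_mem_edge]
    show _ = G.degree u + G.degree v
    omega

end Aux

theorem Findex_Tsum {α β : Type*} [Fintype α] [Fintype β]
    (G : SimpleGraph α) (H : SimpleGraph β)
    (hcard : 2 ≤ Fintype.card α) (hG : G.Connected) (hH : H.Connected) :
    Findex (FSum (Tgraph G) H) =
      8 * Fintype.card β * Findex G + Fintype.card α * Findex H
        + 24 * H.edgeFinset.card * M1 G + 12 * G.edgeFinset.card * M1 H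
        + Fintype.card β * xiIndex G 4 + 3 * Fintype.card β * ReZG G := by
  classical
  have hdeg : ∀ (x : α ⊕ ↥G.edgeSet) (w : β), (FSum (Tgraph G) H).degree (x, w)
      = (Tgraph G).degree x + if x ∈ Set.range (Sum.inl : α → α ⊕ ↥G.edgeSet)
          then H.degree w else 0 := by
    intro x w
    convert hierProd_degree (Tgraph G) H (Set.range Sum.inl) x w using 2
    · rfl
    rcases em (x ∈ Set.range (Sum.inl : α → α ⊕ ↥G.edgeSet)) with h | h <;> simp [h]
  have hinl : ∀ u : α, (Sum.inl u : α ⊕ ↥G.edgeSet) ∈ Set.range (Sum.inl : α → α ⊕ ↥G.edgeSet) :=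
    fun u => ⟨u, rfl⟩
  have hinr : ∀ e : ↥G.edgeSet,
      (Sum.inr e : α ⊕ ↥G.edgeSet) ∉ Set.range (Sum.inl : α → α ⊕ ↥G.edgeSet) := by
    rintro e ⟨a, ha⟩
    exact absurd ha (by simp)
  rw [Findex, Fintype.sum_prod_type]
  simp_rw [hdeg]
  rw [Fintype.sum_sum_type]
  have hterm1 : ∑ u : α, ∑ w : β, ((Tgraph G).degree (Sum.inl u)
        + if (Sum.inl u : α ⊕ ↥G.edgeSet) ∈ Set.range (Sum.inl : α → α ⊕ ↥G.edgeSet)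
          then H.degree w else 0) ^ 3
      = 8 * Fintype.card β * Findex G + Fintype.card α * Findex H
        + 24 * H.edgeFinset.card * M1 G + 12 * G.edgeFinset.card * M1 H := by
    have e1 : ∀ (u : α) (w : β), ((Tgraph G).degree (Sum.inl u)
          + if (Sum.inl u : α ⊕ ↥G.edgeSet) ∈ Set.range (Sum.inl : α → α ⊕ ↥G.edgeSet)
            then H.degree w else 0) ^ 3
        = 8 * G.degree u ^ 3 + (12 * G.degree u ^ 2) * H.degree w
          + (6 * G.degree u) * H.degree w ^ 2 + H.degree w ^ 3 := by
      intro u w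
      rw [if_pos (hinl u), T_deg_inl]
      ring
    simp_rw [e1]
    simp only [Finset.sum_add_distrib, ← Finset.mul_sum, ← Finset.sum_mul,
      Finset.sum_const, smul_eq_mul, Finset.card_univ]
    rw [H.sum_degrees_eq_twice_card_edges, G.sum_degrees_eq_twice_card_edges]
    simp only [Findex, M1]
    ring
  have hterm2 : ∑ e : ↥G.edgeSet, ∑ w : β, ((Tgraph G).degree (Sum.inr e)
        + if (Sum.inr e : α ⊕ ↥G.edgeSet) ∈ Set.range (Sum.inl : α → α ⊕ ↥G.edgeSet)
          then H.degree w else 0) ^ 3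
      = Fintype.card β * xiIndex G 4 + 3 * Fintype.card β * ReZG G := by
    have e2 : ∀ (e : ↥G.edgeSet) (w : β), ((Tgraph G).degree (Sum.inr e)
          + if (Sum.inr e : α ⊕ ↥G.edgeSet) ∈ Set.range (Sum.inl : α → α ⊕ ↥G.edgeSet)
            then H.degree w else 0) ^ 3
        = (Sym2.lift ⟨fun a b => G.degree a + G.degree b, fun a b => by ring⟩
            (e : Sym2 α)) ^ 3 := by
      intro e w
      rw [if_neg (hinr e), add_zero, T_deg_inr]
    simp_rw [e2, Finset.sum_const, smul_eq_mul, Finset.card_univ, ← Finset.mul_sum]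
    rw [sum_subtype_edge G (fun e => (Sym2.lift
      ⟨fun a b => G.degree a + G.degree b, fun a b => by ring⟩ e) ^ 3)]
    have hsplit : ∀ e : Sym2 α, (Sym2.lift
          ⟨fun a b => G.degree a + G.degree b, fun a b => by ring⟩ e) ^ 3
        = Sym2.lift ⟨fun a b => (fun v => G.degree v ^ 3) a + (fun v => G.degree v ^ 3) b,
            fun a b => by ring⟩ e
          + 3 * Sym2.lift ⟨fun u v => G.degree u * G.degree v * (G.degree u + G.degree v),
            fun u v => by ring⟩ e := by
      intro e
      induction e using Sym2.ind with
      | _ a b => simp only [Sym2.lift_mk]; ring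
    rw [Finset.sum_congr rfl fun e _ => hsplit e, Finset.sum_add_distrib, ← Finset.mul_sum,
      edge_sum_add' G (fun v => G.degree v ^ 3)]
    have hxi : ∑ v, G.degree v * G.degree v ^ 3 = xiIndex G 4 := by
      rw [xiIndex]
      exact Finset.sum_congr rfl fun v _ => by ring
    rw [hxi]
    rw [show (∑ e ∈ G.edgeFinset, Sym2.lift
        ⟨fun u v => G.degree u * G.degree v * (G.degree u + G.degree v),
          fun u v => by ring⟩ e) = ReZG G from rfl]
    ring
  rw [hterm1, hterm2]
  ring
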